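/- Let ε > 0 and δ ∈ (0,1). Let μ ≥ 0 satisfy Q(μ) = δ, where Q(x) = (1/√(2π)) ∫_x^∞ exp(−u²/2) du, and set κ = (μ + √(μ² + 2ε))/(2ε). Let k be a positive integer, let m, m' ∈ ℝ^k with ‖m − m'‖₂ ≤ Δ for some Δ > 0, and let σ = κΔ. Then for every Borel measurable set S ⊆ ℝ^k, the Gaussian measures ν = ⨂_{i=1}^k N(m_i, σ²) and ν' = ⨂_{i=1}^k N(m'_i, σ²) satisfy ν(S) ≤ e^ε · ν'(S) + δ. -/

import Mathlib

open MeasureTheory ProbabilityTheory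

section GaussAuxiliary

open Real Set
open scoped ENNReal NNReal

namespace GaussAux

lemma prod_withDensity {α β : Type*} [MeasurableSpace α] [MeasurableSpace β]
    (μ : Measure α) (ν : Measure β) [SigmaFinite μ] [SigmaFinite ν]
    {f : α → ℝ≥0∞} {g : β → ℝ≥0∞} (hf : Measurable f) (hg : Measurable g)
    [SigmaFinite (μ.withDensity f)] [SigmaFinite (ν.withDensity g)] :
    (μ.withDensity f).prod (ν.withDensity g)
      = (μ.prod ν).withDensity (fun p => f p.1 * g p.2) := by
  refine Measure.prod_eq fun s t hs ht => ?_
  rw [withDensity_apply _ (hs.prod ht), withDensity_apply _ hs, withDensity_apply _ ht,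
    ← Measure.prod_restrict, lintegral_prod_mul hf.aemeasurable hg.aemeasurable]

lemma map_withDensity_equiv {α β : Type*} [MeasurableSpace α] [MeasurableSpace β]
    (ρ : Measure α) (e : α ≃ᵐ β) {g : β → ℝ≥0∞} (hg : Measurable g) :
    (ρ.map e).withDensity g = (ρ.withDensity (fun x => g (e x))).map e := by
  ext s hs
  rw [Measure.map_apply e.measurable hs, withDensity_apply _ hs,
    withDensity_apply _ (e.measurable hs),
    setLIntegral_map hs hg e.measurable]

lemma pi_gaussian_eq (n : ℕ) (mm : Fin n → ℝ) {v : ℝ≥0} (hv : v ≠ 0) :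
    Measure.pi (fun i => gaussianReal (mm i) v)
      = (Measure.pi fun _ : Fin n => (volume : Measure ℝ)).withDensity
          (fun x => ∏ i, gaussianPDF (mm i) v (x i)) := by
  induction n with
  | zero =>
      simp only [Finset.univ_eq_empty, Finset.prod_empty]
      rw [Measure.pi_of_empty, Measure.pi_of_empty]
      exact withDensity_one.symm
  | succ n ih =>
      have h0 := (measurePreserving_piFinSuccAbove (fun i => gaussianReal (mm i) v) 0).symm
      have hvol := (measurePreserving_piFinSuccAbove (fun _ : Fin (n+1) => (volume : Measure ℝ)) 0).symm
      set e := MeasurableEquiv.piFinSuccAbove (fun _ : Fin (n+1) => ℝ) 0 with he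
      rw [← h0.map_eq, ih (fun j => mm ((0 : Fin (n+1)).succAbove j)),
        gaussianReal_of_var_ne_zero _ hv]
      have inst1 : SigmaFinite ((volume : Measure ℝ).withDensity (gaussianPDF (mm 0) v)) := by
        rw [← gaussianReal_of_var_ne_zero _ hv]; infer_instance
      have inst2 : SigmaFinite ((Measure.pi fun _ : Fin n => (volume : Measure ℝ)).withDensity
          (fun x => ∏ i, gaussianPDF (mm ((0 : Fin (n+1)).succAbove i)) v (x i))) := by
        rw [← ih]; infer_instance
      rw [prod_withDensity _ _ (measurable_gaussianPDF _ _)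
        (by exact Finset.measurable_prod _ fun i _ =>
          (measurable_gaussianPDF _ _).comp (measurable_pi_apply i))]
      rw [← hvol.map_eq, map_withDensity_equiv _ _
        (by exact Finset.measurable_prod _ fun i _ =>
          (measurable_gaussianPDF _ _).comp (measurable_pi_apply i))]
      have hdens : (fun p : ℝ × (Fin n → ℝ) => gaussianPDF (mm 0) v p.1
            * ∏ i, gaussianPDF (mm ((0 : Fin (n+1)).succAbove i)) v (p.2 i))
          = fun x : ℝ × (Fin n → ℝ) => ∏ i : Fin (n+1), gaussianPDF (mm i) v (e.symm x i) := by
        funext p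
        have hsymm : (e.symm p : Fin (n+1) → ℝ) = Fin.cons p.1 p.2 := by
          simp [he, MeasurableEquiv.piFinSuccAbove_symm_apply, Fin.insertNth_zero, Fin.consEquiv]
        rw [hsymm, Fin.prod_univ_succ]
        simp [Fin.succAbove_zero]
      rw [hdens]

lemma pdf_conv_identity (m₁ m₂ : ℝ) {v₁ v₂ : ℝ≥0} (h₁ : v₁ ≠ 0) (h₂ : v₂ ≠ 0) (z y : ℝ) :
    gaussianPDFReal m₁ v₁ (z - y) * gaussianPDFReal m₂ v₂ y
      = gaussianPDFReal (m₁ + m₂) (v₁ + v₂) z *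
        gaussianPDFReal (m₂ + ((v₂ : ℝ) / ((v₁ : ℝ) + v₂)) * (z - m₁ - m₂)) (v₁ * v₂ / (v₁ + v₂)) y := by
  have hp : (0 : ℝ) < v₁ := lt_of_le_of_ne v₁.coe_nonneg (by exact_mod_cast h₁.symm)
  have hq : (0 : ℝ) < v₂ := lt_of_le_of_ne v₂.coe_nonneg (by exact_mod_cast h₂.symm)
  have hV : (0 : ℝ) < (v₁ : ℝ) + v₂ := by linarith
  simp only [gaussianPDFReal]
  have hcoe1 : ((v₁ + v₂ : ℝ≥0) : ℝ) = (v₁ : ℝ) + v₂ := by push_cast; ring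
  have hcoe2 : ((v₁ * v₂ / (v₁ + v₂) : ℝ≥0) : ℝ) = (v₁ : ℝ) * v₂ / ((v₁ : ℝ) + v₂) := by
    push_cast; ring
  rw [hcoe1, hcoe2]
  have hconst : (√(2 * π * v₁))⁻¹ * (√(2 * π * v₂))⁻¹
      = (√(2 * π * ((v₁ : ℝ) + v₂)))⁻¹ * (√(2 * π * ((v₁ : ℝ) * v₂ / ((v₁ : ℝ) + v₂))))⁻¹ := by
    rw [← mul_inv, ← mul_inv, ← Real.sqrt_mul (by positivity), ← Real.sqrt_mul (by positivity)]
    congr 1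
    field_simp
  have hexp : rexp (-(z - y - m₁) ^ 2 / (2 * v₁)) * rexp (-(y - m₂) ^ 2 / (2 * v₂))
      = rexp (-(z - (m₁ + m₂)) ^ 2 / (2 * ((v₁ : ℝ) + v₂)))
        * rexp (-(y - (m₂ + (v₂ : ℝ) / ((v₁ : ℝ) + v₂) * (z - m₁ - m₂))) ^ 2
            / (2 * ((v₁ : ℝ) * v₂ / ((v₁ : ℝ) + v₂)))) := by
    rw [← Real.exp_add, ← Real.exp_add]
    congr 1
    field_simp
    ring
  calc (√(2 * π * v₁))⁻¹ * rexp (-(z - y - m₁) ^ 2 / (2 * v₁))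
        * ((√(2 * π * v₂))⁻¹ * rexp (-(y - m₂) ^ 2 / (2 * v₂)))
      = ((√(2 * π * v₁))⁻¹ * (√(2 * π * v₂))⁻¹)
        * (rexp (-(z - y - m₁) ^ 2 / (2 * v₁)) * rexp (-(y - m₂) ^ 2 / (2 * v₂))) := by ring
    _ = _ := by rw [hconst, hexp]; ring

lemma gaussian_conv (m₁ m₂ : ℝ) (v₁ v₂ : ℝ≥0) :
    ((gaussianReal m₁ v₁).prod (gaussianReal m₂ v₂)).map (fun p : ℝ × ℝ => p.1 + p.2)
      = gaussianReal (m₁ + m₂) (v₁ + v₂) := by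
  by_cases h₁ : v₁ = 0
  · subst h₁
    rw [gaussianReal_zero_var, Measure.dirac_prod,
      Measure.map_map (by fun_prop) measurable_prodMk_left]
    have : ((fun p : ℝ × ℝ => p.1 + p.2) ∘ Prod.mk m₁) = (m₁ + ·) := rfl
    rw [this, gaussianReal_map_const_add, zero_add, add_comm m₂ m₁]
  by_cases h₂ : v₂ = 0
  · subst h₂
    rw [gaussianReal_zero_var, Measure.prod_dirac,
      Measure.map_map (by fun_prop) (by fun_prop)]
    have : ((fun p : ℝ × ℝ => p.1 + p.2) ∘ (fun x => (x, m₂))) = (· + m₂) := rfl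
    rw [this, gaussianReal_map_add_const, add_zero]
  -- main case
  have hV : v₁ + v₂ ≠ 0 := by simp [h₁, h₂]
  have hw : v₁ * v₂ / (v₁ + v₂) ≠ 0 := by
    rw [ne_eq, div_eq_zero_iff]
    push_neg
    exact ⟨mul_ne_zero h₁ h₂, hV⟩
  ext s hs
  have hadd : Measurable fun p : ℝ × ℝ => p.1 + p.2 := by fun_prop
  rw [Measure.map_apply hadd hs]
  have inst1 : SigmaFinite ((volume : Measure ℝ).withDensity (gaussianPDF m₁ v₁)) := by
    rw [← gaussianReal_of_var_ne_zero _ h₁]; infer_instance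
  have inst2 : SigmaFinite ((volume : Measure ℝ).withDensity (gaussianPDF m₂ v₂)) := by
    rw [← gaussianReal_of_var_ne_zero _ h₂]; infer_instance
  rw [gaussianReal_of_var_ne_zero _ h₁, gaussianReal_of_var_ne_zero _ h₂,
    prod_withDensity _ _ (measurable_gaussianPDF _ _) (measurable_gaussianPDF _ _)]
  set F : ℝ → ℝ≥0∞ := s.indicator 1 with hF
  have hFmeas : Measurable F := measurable_one.indicator hs
  have hpre : ((fun p : ℝ × ℝ => p.1 + p.2) ⁻¹' s).indicator (1 : ℝ × ℝ → ℝ≥0∞)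
      = fun p : ℝ × ℝ => F (p.1 + p.2) := by
    funext p
    by_cases hp : p.1 + p.2 ∈ s <;> simp [hF, Set.indicator, hp]
  have hd : Measurable fun p : ℝ × ℝ => gaussianPDF m₁ v₁ p.1 * gaussianPDF m₂ v₂ p.2 := by
    exact ((measurable_gaussianPDF _ _).comp measurable_fst).mul
      ((measurable_gaussianPDF _ _).comp measurable_snd)
  have hFc : Measurable fun p : ℝ × ℝ => F (p.1 + p.2) := hFmeas.comp hadd
  rw [← lintegral_indicator_one (hadd hs), hpre,
    lintegral_withDensity_eq_lintegral_mul _ hd hFc]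
  have hmeas2 : Measurable fun p : ℝ × ℝ =>
      gaussianPDF m₁ v₁ p.1 * gaussianPDF m₂ v₂ p.2 * F (p.1 + p.2) := by
    exact (((measurable_gaussianPDF _ _).comp measurable_fst).mul
      ((measurable_gaussianPDF _ _).comp measurable_snd)).mul (hFmeas.comp hadd)
  simp only [Pi.mul_apply]
  rw [lintegral_prod_symm _ hmeas2.aemeasurable]
  have step1 : ∀ y : ℝ, (∫⁻ x, gaussianPDF m₁ v₁ x * gaussianPDF m₂ v₂ y * F (x + y))
      = ∫⁻ z, gaussianPDF m₁ v₁ (z - y) * gaussianPDF m₂ v₂ y * F z := by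
    intro y
    have := lintegral_add_right_eq_self (μ := (volume : Measure ℝ))
      (fun z => gaussianPDF m₁ v₁ (z - y) * gaussianPDF m₂ v₂ y * F z) y
    rw [← this]
    simp
  simp_rw [step1]
  rw [lintegral_lintegral_swap (by
    exact ((((measurable_gaussianPDF m₁ v₁).comp
        (measurable_snd.sub measurable_fst)).mul
        ((measurable_gaussianPDF m₂ v₂).comp measurable_fst)).mul
        (hFmeas.comp measurable_snd)).aemeasurable)]
  have key : ∀ z : ℝ, (∫⁻ y, gaussianPDF m₁ v₁ (z - y) * gaussianPDF m₂ v₂ y * F z)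
      = gaussianPDF (m₁ + m₂) (v₁ + v₂) z * F z := by
    intro z
    have hm : Measurable fun y : ℝ => gaussianPDF m₁ v₁ (z - y) * gaussianPDF m₂ v₂ y := by
      exact ((measurable_gaussianPDF m₁ v₁).comp
        (measurable_const.sub measurable_id)).mul (measurable_gaussianPDF m₂ v₂)
    rw [lintegral_mul_const _ hm]
    congr 1
    have hofr : ∀ y : ℝ, gaussianPDF m₁ v₁ (z - y) * gaussianPDF m₂ v₂ y
        = ENNReal.ofReal (gaussianPDFReal m₁ v₁ (z - y) * gaussianPDFReal m₂ v₂ y) := by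
      intro y
      rw [gaussianPDF, gaussianPDF, ← ENNReal.ofReal_mul (gaussianPDFReal_nonneg _ _ _)]
    simp_rw [hofr, pdf_conv_identity m₁ m₂ h₁ h₂ z]
    rw [← ofReal_integral_eq_lintegral_ofReal
      ((integrable_gaussianPDFReal _ _).const_mul _)
      (ae_of_all _ fun y => mul_nonneg (gaussianPDFReal_nonneg _ _ _)
        (gaussianPDFReal_nonneg _ _ _)),
      integral_const_mul, integral_gaussianPDFReal_eq_one _ hw, mul_one]
    rfl
  simp_rw [key]
  rw [gaussianReal_apply _ hV s, ← lintegral_indicator hs (gaussianPDF (m₁ + m₂) (v₁ + v₂))]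
  congr 1
  funext z
  by_cases hz : z ∈ s <;> simp [hF, Set.indicator, hz]

lemma map_pi_gaussian (n : ℕ) (c mm : Fin n → ℝ) (v : ℝ≥0) :
    (Measure.pi fun i => gaussianReal (mm i) v).map (fun x => ∑ i, c i * x i)
      = gaussianReal (∑ i, c i * mm i) (⟨∑ i, (c i)^2, by positivity⟩ * v) := by
  induction n with
  | zero =>
      have h1 : (⟨∑ i : Fin 0, (c i)^2, by positivity⟩ * v : ℝ≥0) = 0 := by
        exact mul_eq_zero_of_left (Subtype.ext (by simp)) v
      rw [h1, gaussianReal_zero_var]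
      rw [Measure.pi_of_empty]
      rw [Measure.map_dirac' (by fun_prop)]
      simp
  | succ n ih =>
      have h0 := (measurePreserving_piFinSuccAbove (fun i => gaussianReal (mm i) v) 0).symm
      set e := MeasurableEquiv.piFinSuccAbove (fun _ : Fin (n+1) => ℝ) 0 with he
      rw [← h0.map_eq, Measure.map_map (by fun_prop) e.symm.measurable]
      have hcomp : ((fun x : Fin (n+1) → ℝ => ∑ i, c i * x i) ∘ e.symm)
          = (fun p : ℝ × ℝ => p.1 + p.2) ∘ (Prod.map (fun y => c 0 * y)
              (fun z : Fin n → ℝ => ∑ j, c (Fin.succ j) * z j)) := by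
        funext p
        have hsymm : (e.symm p : Fin (n+1) → ℝ) = Fin.cons p.1 p.2 := by
          simp [he, MeasurableEquiv.piFinSuccAbove_symm_apply, Fin.insertNth_zero, Fin.consEquiv]
        simp [hsymm, Fin.sum_univ_succ]
      rw [hcomp, ← Measure.map_map (by fun_prop) (by fun_prop),
        ← Measure.map_prod_map _ _ (by fun_prop) (by fun_prop)]
      have hfst : (gaussianReal (mm 0) v).map (fun y => c 0 * y)
          = gaussianReal (c 0 * mm 0) (⟨(c 0)^2, sq_nonneg _⟩ * v) :=
        gaussianReal_map_const_mul (c 0)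
      have hsnd := ih (fun j => c (Fin.succ j)) (fun j => mm ((0 : Fin (n+1)).succAbove j))
      have hsa : ∀ j : Fin n, (0 : Fin (n+1)).succAbove j = Fin.succ j := fun j => rfl
      simp only [hsa] at hsnd ⊢
      rw [hfst, hsnd, gaussian_conv]
      congr 1
      · rw [Fin.sum_univ_succ]
      · erw [← add_mul]
        congr 1
        ext
        show (c 0 ^ 2 + ∑ i : Fin n, c i.succ ^ 2 : ℝ) = ∑ i, c i ^ 2
        rw [Fin.sum_univ_succ]

lemma gaussian_tail (M : ℝ) {w : ℝ≥0} (hw : w ≠ 0) (b : ℝ) :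
    gaussianReal M w (Ioi b) = ENNReal.ofReal
      ((√(2 * π))⁻¹ * ∫ u in Ioi ((b - M) / √(w : ℝ)), rexp (-u^2 / 2)) := by
  have hw' : (0 : ℝ) < w := lt_of_le_of_ne w.coe_nonneg (by exact_mod_cast hw.symm)
  have hsq : (⟨(√(w : ℝ))^2, sq_nonneg _⟩ * 1 : ℝ≥0) = w := by
    apply Subtype.ext; show (√(w:ℝ))^2 * 1 = (w:ℝ); rw [Real.sq_sqrt w.coe_nonneg, mul_one]
  have hmap : gaussianReal M w
      = ((gaussianReal 0 1).map (fun u => √(w : ℝ) * u)).map (· + M) := by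
    rw [gaussianReal_map_const_mul, gaussianReal_map_add_const]; erw [hsq]; rw [mul_zero, zero_add]
  rw [hmap, Measure.map_apply (by fun_prop) measurableSet_Ioi]
  rw [Set.preimage_add_const_Ioi]
  rw [Measure.map_apply (by fun_prop) measurableSet_Ioi]
  have hpre : (fun u => √(w : ℝ) * u) ⁻¹' Ioi (b - M) = Ioi ((b - M) / √(w : ℝ)) :=
    Set.preimage_const_mul_Ioi₀ _ (Real.sqrt_pos.2 hw')
  rw [hpre, gaussianReal_apply_eq_integral _ one_ne_zero]
  congr 1
  rw [← integral_const_mul]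
  congr 1
  funext u
  simp [gaussianPDFReal]

lemma ofReal_prod_fin {n : ℕ} (f : Fin n → ℝ) (h : ∀ i, 0 ≤ f i) :
    ENNReal.ofReal (∏ i, f i) = ∏ i, ENNReal.ofReal (f i) := by
  induction n with
  | zero => simp
  | succ n ih =>
      rw [Fin.prod_univ_succ, Fin.prod_univ_succ, ENNReal.ofReal_mul (h 0),
        ih (fun i => f i.succ) (fun i => h i.succ)]

lemma pdf_shift (m m' : ℝ) {v : ℝ≥0} (hv : v ≠ 0) (t : ℝ) :
    gaussianPDFReal m v t
      = rexp ((m - m') * (2 * t - m - m') / (2 * (v : ℝ))) * gaussianPDFReal m' v t := by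
  have hvp : (0 : ℝ) < v := lt_of_le_of_ne v.coe_nonneg (by exact_mod_cast hv.symm)
  simp only [gaussianPDFReal]
  rw [show rexp ((m - m') * (2 * t - m - m') / (2 * (v : ℝ)))
        * ((√(2 * π * v))⁻¹ * rexp (-(t - m') ^ 2 / (2 * v)))
      = (√(2 * π * v))⁻¹ * (rexp ((m - m') * (2 * t - m - m') / (2 * (v : ℝ)))
        * rexp (-(t - m') ^ 2 / (2 * v))) from by ring, ← Real.exp_add]
  congr 2
  field_simp
  ring

end GaussAux

open GaussAux Real Set
open scoped ENNReal NNReal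

lemma key_ineq (ε μ κ Δ a σ : ℝ) (hε : 0 < ε) (hμ : 0 ≤ μ) (hκpos : 0 < κ)
    (hκμ : 2 * ε * κ ^ 2 = 2 * μ * κ + 1) (hΔ : 0 < Δ) (ha : 0 < a) (haΔ : a ≤ Δ)
    (hσ : σ = κ * Δ) :
    μ * (a * σ) ≤ ε * σ ^ 2 - a ^ 2 / 2 := by
  subst hσ
  have hkey : ε * (κ * Δ) ^ 2 = μ * κ * Δ ^ 2 + Δ ^ 2 / 2 := by
    linear_combination (Δ ^ 2 / 2) * hκμ
  nlinarith [hkey, mul_nonneg (mul_nonneg (mul_nonneg hμ hκpos.le) hΔ.le)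
    (sub_nonneg.2 haΔ), mul_nonneg (sub_nonneg.2 haΔ) (by positivity : (0:ℝ) ≤ Δ + a)]

/-- **Gaussian mechanism for (ε,δ)-differential privacy.**
If `Q(μ) = δ` with `Q` the Gaussian tail function, `κ = (μ + √(μ² + 2ε))/(2ε)`,
`‖m − m'‖ ≤ Δ` and `σ = κΔ`, then the product Gaussian measures with means `m, m'`
and common variance `σ²` satisfy `ν S ≤ e^ε ν' S + δ` for every Borel set `S`. -/
theorem stmt_0 (ε δ : ℝ) (hε : 0 < ε) (hδ : δ ∈ Set.Ioo (0 : ℝ) 1)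
    (μ : ℝ) (hμ : 0 ≤ μ)
    (hQ : (1 / Real.sqrt (2 * Real.pi)) * ∫ u in Set.Ioi μ, Real.exp (-u ^ 2 / 2) = δ)
    (κ : ℝ) (hκ : κ = (μ + Real.sqrt (μ ^ 2 + 2 * ε)) / (2 * ε))
    (k : ℕ) (hk : 0 < k)
    (m m' : EuclideanSpace ℝ (Fin k)) (Δ : ℝ) (hΔ : 0 < Δ)
    (hadj : ‖m - m'‖ ≤ Δ)
    (σ : ℝ) (hσ : σ = κ * Δ)
    (S : Set (Fin k → ℝ)) (hS : MeasurableSet S) :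
    (Measure.pi fun i => gaussianReal (m i) (Real.toNNReal (σ ^ 2))) S
      ≤ ENNReal.ofReal (Real.exp ε)
          * (Measure.pi fun i => gaussianReal (m' i) (Real.toNNReal (σ ^ 2))) S
        + ENNReal.ofReal δ := by
  have hκpos : 0 < κ := by
    rw [hκ]
    have h1 : 0 < √(μ ^ 2 + 2 * ε) := Real.sqrt_pos.2 (by positivity)
    positivity
  have hσpos : 0 < σ := by rw [hσ]; positivity
  set v : ℝ≥0 := Real.toNNReal (σ ^ 2) with hvdef
  have hvcoe : (v : ℝ) = σ ^ 2 := Real.coe_toNNReal _ (sq_nonneg σ)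
  have hv : v ≠ 0 := by
    rw [hvdef, ne_eq, Real.toNNReal_eq_zero, not_le]
    positivity
  by_cases hmm : ∀ i, m i = m' i
  · have heq : (fun i => gaussianReal (m i) v) = fun i => gaussianReal (m' i) v := by
      funext i; rw [hmm i]
    rw [heq]
    refine le_add_right ?_
    conv_lhs => rw [← one_mul ((Measure.pi fun i => gaussianReal (m' i) v) S)]
    exact mul_le_mul_left (ENNReal.one_le_ofReal.2 (Real.one_le_exp hε.le)) _
  push_neg at hmm
  obtain ⟨i₀, hi₀⟩ := hmm
  set d : Fin k → ℝ := fun i => m i - m' i with hddef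
  set A : ℝ := ∑ i, d i ^ 2 with hAdef
  have hA0 : 0 < A := by
    refine Finset.sum_pos' (fun i _ => sq_nonneg _) ⟨i₀, Finset.mem_univ _, ?_⟩
    have : d i₀ ≠ 0 := sub_ne_zero.2 hi₀
    positivity
  set a : ℝ := √A with hadef
  have hapos : 0 < a := Real.sqrt_pos.2 hA0
  have haA : a ^ 2 = A := Real.sq_sqrt hA0.le
  have haΔ : a ≤ Δ := by
    have hnorm : ‖m - m'‖ = a := by
      rw [EuclideanSpace.norm_eq, hadef]
      congr 1
      rw [hAdef]
      refine Finset.sum_congr rfl fun i _ => ?_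
      rw [Real.norm_eq_abs, sq_abs]
      congr 1
    rwa [hnorm] at hadj
  set T : (Fin k → ℝ) → ℝ := fun x => ∑ i, d i * x i with hTdef
  have hT : Measurable T := by
    exact Finset.measurable_sum _ fun i _ => (measurable_pi_apply i).const_mul _
  set c₀ : ℝ := ε * σ ^ 2 + ∑ i, d i * ((m i + m' i) / 2) with hc₀def
  set B : Set (Fin k → ℝ) := T ⁻¹' (Ioi c₀) with hBdef
  have hB : MeasurableSet B := hT measurableSet_Ioi
  have hκμ : 2 * ε * κ ^ 2 = 2 * μ * κ + 1 := by
    have hss : (√(μ ^ 2 + 2 * ε)) ^ 2 = μ ^ 2 + 2 * ε := Real.sq_sqrt (by positivity)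
    rw [hκ]
    field_simp
    nlinarith [hss]
  -- Step B : ν (S ∩ Bᶜ) ≤ e^ε ν' S
  have stepB : (Measure.pi fun i => gaussianReal (m i) v) (S ∩ Bᶜ)
      ≤ ENNReal.ofReal (Real.exp ε) * (Measure.pi fun i => gaussianReal (m' i) v) S := by
    have hmeas' : Measurable fun x : Fin k → ℝ => ∏ i, gaussianPDF (m' i) v (x i) :=
      Finset.measurable_prod _ fun i _ =>
        (measurable_gaussianPDF _ _).comp (measurable_pi_apply i)
    rw [pi_gaussian_eq k (fun i => m i) hv, pi_gaussian_eq k (fun i => m' i) hv,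
      withDensity_apply _ (hS.inter hB.compl), withDensity_apply _ hS]
    calc ∫⁻ x in S ∩ Bᶜ, ∏ i, gaussianPDF (m i) v (x i)
            ∂(Measure.pi fun _ : Fin k => (volume : Measure ℝ))
        ≤ ∫⁻ x in S ∩ Bᶜ, ENNReal.ofReal (Real.exp ε) * ∏ i, gaussianPDF (m' i) v (x i)
            ∂(Measure.pi fun _ : Fin k => (volume : Measure ℝ)) := by
          refine setLIntegral_mono (measurable_const.mul hmeas') fun x hx => ?_
          have hTx : T x ≤ c₀ := not_lt.1 hx.2
          have hEε : (∑ i, d i * (2 * x i - m i - m' i)) / (2 * σ ^ 2) ≤ ε := by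
            rw [div_le_iff₀ (by positivity)]
            have hsum : ∑ i, d i * (2 * x i - m i - m' i)
                = 2 * T x - 2 * ∑ i, d i * ((m i + m' i) / 2) := by
              rw [hTdef, Finset.mul_sum, Finset.mul_sum, ← Finset.sum_sub_distrib]
              exact Finset.sum_congr rfl fun i _ => by ring
            rw [hsum, hc₀def] at *
            nlinarith [hTx]
          have hprod : ∏ i, gaussianPDFReal (m i) v (x i)
              = rexp ((∑ i, d i * (2 * x i - m i - m' i)) / (2 * σ ^ 2))
                * ∏ i, gaussianPDFReal (m' i) v (x i) := by
            have hco : ∀ i : Fin k, gaussianPDFReal (m i) v (x i)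
                = rexp (d i * (2 * x i - m i - m' i) / (2 * σ ^ 2))
                  * gaussianPDFReal (m' i) v (x i) := by
              intro i
              have h := pdf_shift (m i) (m' i) hv (x i)
              rw [hvcoe] at h
              exact h
            rw [Finset.prod_congr rfl fun i _ => hco i, Finset.prod_mul_distrib,
              ← Real.exp_sum, ← Finset.sum_div]
          simp only [gaussianPDF]
          rw [← ofReal_prod_fin _ (fun i => gaussianPDFReal_nonneg _ _ _),
            ← ofReal_prod_fin _ (fun i => gaussianPDFReal_nonneg _ _ _),
            ← ENNReal.ofReal_mul (Real.exp_nonneg _), hprod]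
          refine ENNReal.ofReal_le_ofReal ?_
          refine mul_le_mul_of_nonneg_right (Real.exp_le_exp.2 hEε) ?_
          exact Finset.prod_nonneg fun i _ => gaussianPDFReal_nonneg _ _ _
      _ = ENNReal.ofReal (Real.exp ε) * ∫⁻ x in S ∩ Bᶜ, ∏ i, gaussianPDF (m' i) v (x i)
            ∂(Measure.pi fun _ : Fin k => (volume : Measure ℝ)) :=
          lintegral_const_mul _ hmeas'
      _ ≤ ENNReal.ofReal (Real.exp ε) * ∫⁻ x in S, ∏ i, gaussianPDF (m' i) v (x i)
            ∂(Measure.pi fun _ : Fin k => (volume : Measure ℝ)) :=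
          mul_le_mul_right (lintegral_mono_set inter_subset_left) _
  -- Step C : ν B ≤ δ
  have stepC : (Measure.pi fun i => gaussianReal (m i) v) B ≤ ENNReal.ofReal δ := by
    have hAnn : (⟨∑ i, d i ^ 2, by positivity⟩ : ℝ≥0) ≠ 0 := by
      exact fun h => (ne_of_gt hA0) (congrArg Subtype.val h)
    have hmapB : (Measure.pi fun i => gaussianReal (m i) v) B
        = ((Measure.pi fun i => gaussianReal (m i) v).map (fun x => ∑ i, d i * x i))
            (Ioi c₀) := (Measure.map_apply hT measurableSet_Ioi).symm
    rw [hmapB, map_pi_gaussian k d (fun i => m i) v, gaussian_tail _ (mul_ne_zero hAnn hv) c₀]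
    have hQint : Integrable (fun u : ℝ => rexp (-u ^ 2 / 2)) := by
      have h := integrable_exp_neg_mul_sq (show (0 : ℝ) < 1 / 2 by norm_num)
      have heq : (fun u : ℝ => rexp (-u ^ 2 / 2)) = fun u => rexp (-(1 / 2) * u ^ 2) := by
        funext u; congr 1; ring
      rw [heq]; exact h
    refine ENNReal.ofReal_le_ofReal ?_
    rw [← hQ, one_div]
    refine mul_le_mul_of_nonneg_left ?_ (by positivity)
    refine setIntegral_mono_set hQint.integrableOn
      (ae_of_all _ fun u => Real.exp_nonneg _) (HasSubset.Subset.eventuallyLE (Ioi_subset_Ioi ?_))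
    -- μ ≤ (c₀ - ∑ i, d i * m i) / √(W)
    have hWcoe : ((⟨∑ i, d i ^ 2, by positivity⟩ * v : ℝ≥0) : ℝ) = A * σ ^ 2 := by
      erw [NNReal.coe_mul, hvcoe]
      rfl
    rw [hWcoe]
    have hsqrtW : √(A * σ ^ 2) = a * σ := by
      rw [Real.sqrt_mul hA0.le, Real.sqrt_sq hσpos.le]
    rw [hsqrtW]
    have hcM : c₀ - (∑ i, d i * m i) = ε * σ ^ 2 - A / 2 := by
      have hs3 : ∑ i, d i * ((m i + m' i) / 2) - ∑ i, d i * m i = -(A / 2) := by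
        rw [← Finset.sum_sub_distrib]
        have hterm : ∀ i : Fin k, d i * ((m i + m' i) / 2) - d i * m i = -(d i ^ 2 / 2) := by
          intro i
          simp only [hddef]
          ring
        rw [Finset.sum_congr rfl fun i _ => hterm i, Finset.sum_neg_distrib,
          ← Finset.sum_div, ← hAdef]
      rw [hc₀def]
      linarith
    rw [show c₀ - ∑ i, d i * m i = ε * σ ^ 2 - A / 2 from hcM]
    rw [le_div_iff₀ (by positivity), ← haA]
    exact key_ineq ε μ κ Δ a σ hε hμ hκpos hκμ hΔ hapos haΔ hσ
  calc (Measure.pi fun i => gaussianReal (m i) v) S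
      ≤ (Measure.pi fun i => gaussianReal (m i) v) ((S ∩ Bᶜ) ∪ B) := by
        refine measure_mono fun x hx => ?_
        by_cases hxB : x ∈ B
        · exact Or.inr hxB
        · exact Or.inl ⟨hx, hxB⟩
    _ ≤ (Measure.pi fun i => gaussianReal (m i) v) (S ∩ Bᶜ)
          + (Measure.pi fun i => gaussianReal (m i) v) B := measure_union_le _ _
    _ ≤ _ := add_le_add stepB stepC

end GaussAuxiliary
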